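/- Let (e₁,e₂,e₃) be the standard basis of ℝ³, let g be the symmetric bilinear form on ℝ³ with Gram matrix diag(1,1,−1), and let α,β,γ,δ ∈ ℝ with α + δ ≠ 0 and αγ = 0. Define the unique bilinear skew-symmetric bracket on ℝ³ (the Lie algebra 𝔤₇) by [e₁,e₂] = −αe₁ − βe₂ − βe₃, [e₁,e₃] = αe₁ + βe₂ + βe₃, [e₂,e₃] = γe₁ + δe₂ + δe₃. Then g is cyclic with respect to this bracket if and only if γ = 0. -/

import Mathlib

theorem stmt_10 (α β γ δ : ℝ)
    (had : α + δ ≠ 0)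
    (hcomp : α * γ = 0)
    (B : (Fin 3 → ℝ) →ₗ[ℝ] (Fin 3 → ℝ) →ₗ[ℝ] (Fin 3 → ℝ))
    (hskew : ∀ x y, B x y = -B y x)
    (e : Fin 3 → Fin 3 → ℝ) (he : ∀ i, e i = Pi.single i 1)
    (h12 : B (e 0) (e 1) = -α • e 0 - β • e 1 - β • e 2)
    (h13 : B (e 0) (e 2) = α • e 0 + β • e 1 + β • e 2)
    (h23 : B (e 1) (e 2) = γ • e 0 + δ • e 1 + δ • e 2)
    (g : (Fin 3 → ℝ) → (Fin 3 → ℝ) → ℝ)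
    (hg : ∀ x y, g x y = x 0 * y 0 + x 1 * y 1 - x 2 * y 2) :
    (∀ x y z, g (B x y) z + g (B y z) x + g (B z x) y = 0) ↔ (γ = 0) := by
  have hBxx : ∀ v, B v v = 0 := by
    intro v
    have h2 : B v v + B v v = 0 := by
      nth_rewrite 2 [hskew v v]
      simp
    have h3 : B v v = (2:ℝ)⁻¹ • (B v v + B v v) := by module
    rw [h2, smul_zero] at h3
    exact h3
  have he0 : e 0 = ![1,0,0] := by funext i; fin_cases i <;> simp [he]
  have he1 : e 1 = ![0,1,0] := by funext i; fin_cases i <;> simp [he]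
  have he2 : e 2 = ![0,0,1] := by funext i; fin_cases i <;> simp [he]
  have hx : ∀ x : Fin 3 → ℝ, x = x 0 • e 0 + x 1 • e 1 + x 2 • e 2 := by
    intro x; funext i
    fin_cases i <;> simp [he0, he1, he2]
  have hB : ∀ x y : Fin 3 → ℝ, B x y =
      (x 0 * y 1 - x 1 * y 0) • B (e 0) (e 1) +
      (x 0 * y 2 - x 2 * y 0) • B (e 0) (e 2) +
      (x 1 * y 2 - x 2 * y 1) • B (e 1) (e 2) := by
    intro x y
    conv_lhs => rw [hx x, hx y]
    simp only [map_add, map_smul, LinearMap.add_apply, LinearMap.smul_apply,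
      hBxx, smul_zero, add_zero, zero_add]
    rw [hskew (e 1) (e 0), hskew (e 2) (e 0), hskew (e 2) (e 1)]
    module
  constructor
  · intro H
    have h := H (e 0) (e 1) (e 2)
    rw [hskew (e 2) (e 0)] at h
    rw [h12, h13, h23] at h
    simp only [hg, he0, he1, he2] at h
    norm_num [Matrix.cons_val_two, Matrix.tail_cons, Matrix.head_cons, Matrix.vecHead, Matrix.vecTail] at h
    linarith
  · intro hγ x y z
    rw [hB x y, hB y z, hB z x, h12, h13, h23, hγ]
    simp only [hg, he0, he1, he2, Pi.add_apply, Pi.smul_apply, Pi.sub_apply, Pi.neg_apply,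
      smul_eq_mul, Matrix.cons_val_zero, Matrix.cons_val_one, Matrix.head_cons,
      Matrix.cons_val_two, Matrix.tail_cons]
    ring
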